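/- arXiv:2008.09573 — 2 statements merged into one kernel-verified Lean document; each statement's English description precedes it below -/
import Mathlib

section
/- Let N be a finitely generated module over R = ℤ_p[[X]]. Suppose there exists a height-one prime ideal Q₀ of R with Q₀ ≠ (p) such that N/Q₀N is finite. Then N is a torsion R-module. -/
def IsHeightOnePrime {R : Type*} [CommRing R] [IsDomain R] (P : Ideal R) : Prop :=
  P.IsPrime ∧ P ≠ ⊥ ∧ ∀ Q : Ideal R, Q.IsPrime → Q < P → Q = ⊥

theorem stmt2 (p : ℕ) [Fact (Nat.Prime p)] (hodd : Odd p)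
    (N : Type*) [AddCommGroup N] [Module (PowerSeries ℤ_[p]) N]
    [Module.Finite (PowerSeries ℤ_[p]) N]
    (Q₀ : Ideal (PowerSeries ℤ_[p])) (hQ₀ : IsHeightOnePrime Q₀)
    (hQ₀p : Q₀ ≠ Ideal.span {(p : PowerSeries ℤ_[p])})
    (hfin : Finite (N ⧸ (Q₀ • ⊤ : Submodule (PowerSeries ℤ_[p]) N))) :
    Module.IsTorsion (PowerSeries ℤ_[p]) N := by
  classical
  set R := PowerSeries ℤ_[p] with hR
  obtain ⟨hprime, hne, hmin⟩ := hQ₀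
  haveI := hprime
  -- Step A : R ⧸ Q₀ is not finite
  have hinf : ¬ Finite (R ⧸ Q₀) := by
    intro hfinQ
    have hfield : IsField (R ⧸ Q₀) := Finite.isField_of_domain _
    have hmax : Q₀.IsMaximal := Ideal.Quotient.maximal_of_isField _ hfield
    have hQeq : Q₀ = IsLocalRing.maximalIdeal R := IsLocalRing.eq_maximalIdeal hmax
    have hXmem : (PowerSeries.X : R) ∈ Q₀ := by
      rw [hQeq, IsLocalRing.mem_maximalIdeal, mem_nonunits_iff]
      intro hu
      rw [PowerSeries.isUnit_iff_constantCoeff, PowerSeries.constantCoeff_X] at hu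
      exact not_isUnit_zero hu
    have hpmem : ((p : R)) ∈ Q₀ := by
      rw [hQeq, IsLocalRing.mem_maximalIdeal, mem_nonunits_iff]
      intro hu
      rw [PowerSeries.isUnit_iff_constantCoeff] at hu
      rw [map_natCast] at hu
      exact PadicInt.p_nonunit hu
    have hpne : ((p : ℤ_[p])) ≠ 0 := by
      exact_mod_cast (Fact.out : Nat.Prime p).ne_zero
    have hle : Ideal.span ({PowerSeries.X} : Set R) ≤ Q₀ :=
      Ideal.span_le.mpr (Set.singleton_subset_iff.mpr hXmem)
    have hltne : Ideal.span ({PowerSeries.X} : Set R) ≠ Q₀ := by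
      intro heq
      have hmem : ((p : R)) ∈ Ideal.span ({PowerSeries.X} : Set R) := heq ▸ hpmem
      rw [Ideal.mem_span_singleton, PowerSeries.X_dvd_iff, map_natCast] at hmem
      exact hpne hmem
    have hlt : Ideal.span ({PowerSeries.X} : Set R) < Q₀ := lt_of_le_of_ne hle hltne
    have hbot := hmin _ PowerSeries.span_X_isPrime hlt
    rw [Ideal.span_singleton_eq_bot] at hbot
    exact PowerSeries.X_ne_zero hbot
  -- Step B : for every y, some a ∉ Q₀ sends y into Q₀ • ⊤
  have stepB : ∀ y : N, ∃ a : R, a ∉ Q₀ ∧ a • y ∈ (Q₀ • ⊤ : Submodule R N) := by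
    intro y
    by_contra hcon
    push_neg at hcon
    set f : R →ₗ[R] N ⧸ (Q₀ • ⊤ : Submodule R N) :=
      LinearMap.toSpanSingleton R _ (Submodule.Quotient.mk y) with hf
    have hfval : ∀ a : R, f a = Submodule.Quotient.mk (a • y) := by
      intro a
      simp [hf, LinearMap.toSpanSingleton_apply, ← Submodule.Quotient.mk_smul]
    have hker : LinearMap.ker f = Q₀ := by
      ext a
      rw [LinearMap.mem_ker, hfval, Submodule.Quotient.mk_eq_zero]
      constructor
      · intro h
        by_contra haQ
        exact (hcon a haQ) h
      · intro h
        exact Submodule.smul_mem_smul h Submodule.mem_top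
    have hfin1 : Finite (LinearMap.range f) := Subtype.finite
    have hfin2 : Finite (R ⧸ LinearMap.ker f) :=
      Finite.of_equiv _ (f.quotKerEquivRange).symm.toEquiv
    rw [hker] at hfin2
    exact hinf hfin2
  -- Step C : localize at Q₀ and use Nakayama
  set S := Q₀.primeCompl with hS
  set Rₚ := Localization S with hRp
  set Nₚ := LocalizedModule S N with hNp
  haveI : IsLocalRing Rₚ := IsLocalization.AtPrime.isLocalRing Rₚ Q₀
  haveI : Module.Finite Rₚ Nₚ :=
    Module.Finite.of_isLocalizedModule S (Rₚ := Rₚ) (LocalizedModule.mkLinearMap S N)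
  have hmapmem : ∀ q ∈ Q₀, algebraMap R Rₚ q ∈ IsLocalRing.maximalIdeal Rₚ := fun q hq =>
    (IsLocalization.AtPrime.to_map_mem_maximal_iff Rₚ Q₀ q).mpr hq
  -- elements of Q₀ • ⊤ localize into (maximalIdeal Rₚ) • ⊤
  have key : ∀ z ∈ (Q₀ • ⊤ : Submodule R N),
      LocalizedModule.mk z (1 : S) ∈
        (IsLocalRing.maximalIdeal Rₚ • ⊤ : Submodule Rₚ Nₚ) := by
    intro z hz
    refine Submodule.smul_induction_on hz ?_ ?_
    · intro q hq n _
      have h1 : LocalizedModule.mk (q • n) (1 : S)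
          = algebraMap R Rₚ q • LocalizedModule.mk n (1 : S) := by
        rw [algebraMap_smul, LocalizedModule.smul'_mk]
      rw [h1]
      exact Submodule.smul_mem_smul (hmapmem q hq) Submodule.mem_top
    · intro z1 z2 h1 h2
      have : LocalizedModule.mk (z1 + z2) (1 : S)
          = LocalizedModule.mk z1 (1 : S) + LocalizedModule.mk z2 (1 : S) := by
        rw [LocalizedModule.mk_add_mk]
        simp
      rw [this]
      exact add_mem h1 h2
  have htop : (⊤ : Submodule Rₚ Nₚ) ≤ (IsLocalRing.maximalIdeal Rₚ) • ⊤ := by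
    rintro z -
    induction z using LocalizedModule.induction_on with
    | _ x s =>
      obtain ⟨a, haQ, hax⟩ := stepB x
      have hmk : LocalizedModule.mk x s
          = Localization.mk 1 (s * ⟨a, haQ⟩) • LocalizedModule.mk (a • x) (1 : S) := by
        rw [LocalizedModule.mk_smul_mk, one_smul, mul_one]
        rw [LocalizedModule.mk_eq]
        exact ⟨1, by simp only [one_smul, Submonoid.smul_def, Submonoid.coe_mul, mul_smul]⟩
      rw [hmk]
      exact Submodule.smul_mem _ _ (key _ hax)
  have hbot : (⊤ : Submodule Rₚ Nₚ) = ⊥ :=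
    Submodule.eq_bot_of_le_smul_of_le_jacobson_bot (IsLocalRing.maximalIdeal Rₚ) ⊤
      (Module.Finite.fg_top (R := Rₚ) (M := Nₚ))
      htop
      (by rw [IsLocalRing.jacobson_eq_maximalIdeal ⊥ bot_ne_top])
  -- conclude torsion
  intro x
  have hx0 : LocalizedModule.mk x (1 : S) = (0 : Nₚ) := by
    have : LocalizedModule.mk x (1 : S) ∈ (⊥ : Submodule Rₚ Nₚ) := by
      rw [← hbot]; exact Submodule.mem_top
    simpa using this
  rw [← LocalizedModule.zero_mk (1 : S), LocalizedModule.mk_eq] at hx0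
  obtain ⟨u, hu⟩ := hx0
  simp only [one_smul, smul_zero] at hu
  have hune : (u : R) ≠ 0 := fun h => u.2 (h ▸ Q₀.zero_mem)
  exact ⟨⟨(u : R), mem_nonZeroDivisors_of_ne_zero hune⟩, hu⟩
end

section
/- Fix an odd prime p. Let C' be a countable set of ideals of ℤ_p[[X]]. Then there exists u ∈ 1 + pℤ_p such that the principal ideal (X + 1 − u) does not belong to C', and for this u and every n ≥ 0, the quotient ring ℤ_p[[X]]/((X + 1 − u), (X+1)^{p^n} − u^{p^n}) is infinite (isomorphic to ℤ_p). -/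
open PowerSeries
variable {p : ℕ} [Fact (Nat.Prime p)]

lemma summable_aux (a : ℤ_[p]) (ha : ‖a‖ < 1) (c : ℕ → ℤ_[p]) :
    Summable (fun n => c n * a ^ n) := by
  apply Summable.of_norm_bounded (g := fun n => ‖a‖ ^ n)
    (summable_geometric_of_lt_one (norm_nonneg a) ha)
  intro n
  rw [norm_mul, norm_pow]
  exact mul_le_of_le_one_left (by positivity) (PadicInt.norm_le_one _)

lemma summable_norm_aux (a : ℤ_[p]) (ha : ‖a‖ < 1) (c : ℕ → ℤ_[p]) :
    Summable (fun n => ‖c n * a ^ n‖) := by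
  apply Summable.of_nonneg_of_le (fun n => norm_nonneg _) _
    (summable_geometric_of_lt_one (norm_nonneg a) ha)
  intro n
  rw [norm_mul, norm_pow]
  exact mul_le_of_le_one_left (by positivity) (PadicInt.norm_le_one _)

noncomputable def evHom (a : ℤ_[p]) (ha : ‖a‖ < 1) : PowerSeries ℤ_[p] →+* ℤ_[p] where
  toFun f := ∑' n, coeff n f * a ^ n
  map_one' := by
    show (∑' n, coeff n (1 : PowerSeries ℤ_[p]) * a ^ n) = 1
    rw [tsum_eq_single 0 (fun n hn => by simp [coeff_one, hn])]
    simp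
  map_zero' := by
    show (∑' n, coeff n (0 : PowerSeries ℤ_[p]) * a ^ n) = 0
    simp
  map_add' f g := by
    show (∑' n, coeff n (f + g) * a ^ n) = _
    simp only [map_add, add_mul]
    exact Summable.tsum_add (summable_aux a ha _) (summable_aux a ha _)
  map_mul' f g := by
    show (∑' n, coeff n (f * g) * a ^ n)
      = (∑' n, coeff n f * a ^ n) * (∑' n, coeff n g * a ^ n)
    rw [tsum_mul_tsum_eq_tsum_sum_antidiagonal_of_summable_norm
      (summable_norm_aux a ha _) (summable_norm_aux a ha _)]
    refine tsum_congr fun n => ?_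
    rw [PowerSeries.coeff_mul, Finset.sum_mul]
    refine Finset.sum_congr rfl fun kl hkl => ?_
    rw [← Finset.HasAntidiagonal.mem_antidiagonal.mp hkl, pow_add]
    ring

lemma evHom_apply (a : ℤ_[p]) (ha : ‖a‖ < 1) (f : PowerSeries ℤ_[p]) :
    evHom a ha f = ∑' n, coeff n f * a ^ n := rfl

lemma evHom_C (a : ℤ_[p]) (ha : ‖a‖ < 1) (c : ℤ_[p]) :
    evHom a ha (C c) = c := by
  rw [evHom_apply, tsum_eq_single 0 (fun n hn => by simp [coeff_C, hn])]
  simp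

lemma evHom_X (a : ℤ_[p]) (ha : ‖a‖ < 1) :
    evHom a ha X = a := by
  rw [evHom_apply, tsum_eq_single 1 (fun n hn => by simp [coeff_X, hn])]
  simp

lemma tail_shift (a : ℤ_[p]) (ha : ‖a‖ < 1) (f : PowerSeries ℤ_[p]) (n : ℕ) :
    (∑' k, coeff (n + 1 + k) f * a ^ k)
      = coeff (n + 1) f + a * ∑' k, coeff (n + 2 + k) f * a ^ k := by
  rw [Summable.tsum_eq_zero_add (summable_aux a ha _)]
  simp only [pow_zero, mul_one, add_zero]
  congr 1
  rw [← Summable.tsum_mul_left a (summable_aux a ha (fun k => coeff (n + 2 + k) f))]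
  refine tsum_congr fun k => ?_
  rw [show n + 1 + (k + 1) = n + 2 + k by ring]
  ring

lemma mem_span_of_ev_eq_zero (a : ℤ_[p]) (ha : ‖a‖ < 1) (f : PowerSeries ℤ_[p])
    (hf : evHom a ha f = 0) :
    f ∈ Ideal.span {(X - C a : PowerSeries ℤ_[p])} := by
  rw [Ideal.mem_span_singleton]
  refine ⟨PowerSeries.mk (fun n => ∑' k, coeff (n + 1 + k) f * a ^ k), ?_⟩
  ext n
  rw [sub_mul, map_sub]
  cases n with
  | zero =>
      have h0 : evHom a ha f
          = coeff 0 f + a * ∑' k, coeff (0 + 1 + k) f * a ^ k := by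
        rw [evHom_apply, Summable.tsum_eq_zero_add (summable_aux a ha (fun n => coeff n f))]
        congr 1
        · simp
        rw [← Summable.tsum_mul_left a (summable_aux a ha (fun k => coeff (0 + 1 + k) f))]
        refine tsum_congr fun k => ?_
        rw [show (0:ℕ) + 1 + k = k + 1 by ring]
        ring
      rw [hf] at h0
      simp only [coeff_zero_eq_constantCoeff_apply, map_mul, map_sub, constantCoeff_X,
        constantCoeff_C, constantCoeff_mk, zero_sub, neg_mul, zero_mul]
      rw [coeff_zero_eq_constantCoeff_apply] at h0
      linear_combination -h0
  | succ n =>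
      rw [coeff_succ_X_mul, coeff_mk, coeff_C_mul, coeff_mk]
      rw [tail_shift a ha f n]
      rw [show n + 1 + 1 = n + 2 by ring]
      ring

lemma ker_evHom (a : ℤ_[p]) (ha : ‖a‖ < 1) :
    RingHom.ker (evHom a ha) = Ideal.span {(X - C a : PowerSeries ℤ_[p])} := by
  ext f
  constructor
  · exact fun h => mem_span_of_ev_eq_zero a ha f (RingHom.mem_ker.mp h)
  · intro h
    obtain ⟨g, rfl⟩ := Ideal.mem_span_singleton.mp h
    rw [RingHom.mem_ker, map_mul, map_sub, evHom_X, evHom_C, sub_self, zero_mul]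

lemma norm_p_mul_lt_one (t : ℤ_[p]) : ‖(p : ℤ_[p]) * t‖ < 1 := by
  have hp1 : (1:ℝ) < p := by exact_mod_cast (Fact.out : Nat.Prime p).one_lt
  have hnp : ‖(p : ℤ_[p])‖ < 1 := by
    rw [PadicInt.norm_p]
    rw [inv_lt_one_iff₀]
    right; exact hp1
  calc ‖(p : ℤ_[p]) * t‖ = ‖(p : ℤ_[p])‖ * ‖t‖ := norm_mul _ _
    _ ≤ ‖(p : ℤ_[p])‖ * 1 := by
        exact mul_le_mul_of_nonneg_left (PadicInt.norm_le_one t) (norm_nonneg _)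
    _ < 1 := by rwa [mul_one]

lemma not_countable_padicInt : ¬ Countable ℤ_[p] := by
  classical
  intro hcount
  have hnp : ‖(p : ℤ_[p])‖ < 1 := by
    calc ‖(p : ℤ_[p])‖ = ‖(p : ℤ_[p]) * 1‖ := by rw [mul_one]
      _ < 1 := norm_p_mul_lt_one 1
  have hpne : (p : ℤ_[p]) ≠ 0 := by
    exact_mod_cast Nat.cast_ne_zero.mpr (Fact.out : Nat.Prime p).ne_zero
  have hperf : Perfect (Set.univ : Set ℤ_[p]) := by
    refine ⟨isClosed_univ, ?_⟩
    rw [preperfect_iff_nhds]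
    intro x _ U hU
    obtain ⟨ε, hε, hball⟩ := Metric.mem_nhds_iff.mp hU
    obtain ⟨n, hn⟩ := exists_pow_lt_of_lt_one hε hnp
    refine ⟨x + (p : ℤ_[p]) ^ n, ⟨hball ?_, trivial⟩, ?_⟩
    · rw [Metric.mem_ball, dist_eq_norm, add_sub_cancel_left, norm_pow]
      exact hn
    · intro hcon
      exact pow_ne_zero n hpne (by linear_combination hcon)
  obtain ⟨f, -, -, hf⟩ := hperf.exists_nat_bool_injection Set.univ_nonempty
  have hg : Function.Injective (fun (s : Set ℕ) (n : ℕ) => decide (n ∈ s)) := by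
    intro s t hst
    ext n
    have := congrFun hst n
    simpa using this
  obtain ⟨e, he⟩ := exists_injective_nat ℤ_[p]
  exact Function.cantor_injective (e ∘ f ∘ (fun (s : Set ℕ) (n : ℕ) => decide (n ∈ s)))
    (he.comp (hf.comp hg))

lemma rewrite_gen (t : ℤ_[p]) :
    (X + 1 - C (1 + p * t) : PowerSeries ℤ_[p]) = X - C ((p : ℤ_[p]) * t) := by
  rw [map_add, map_one, map_mul, map_natCast]
  ring

lemma span_inj : Function.Injective (fun lam : ℤ_[p] =>
    Ideal.span {(X + 1 - C (1 + p * lam) : PowerSeries ℤ_[p])}) := by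
  intro l m h
  simp only [rewrite_gen] at h
  have hm : (X - C ((p : ℤ_[p]) * l) : PowerSeries ℤ_[p])
      ∈ Ideal.span {(X - C ((p : ℤ_[p]) * m) : PowerSeries ℤ_[p])} := by
    rw [← h]
    exact Ideal.subset_span rfl
  obtain ⟨g, hg⟩ := Ideal.mem_span_singleton.mp hm
  have := congrArg (evHom ((p : ℤ_[p]) * m) (norm_p_mul_lt_one m)) hg
  simp only [map_mul, map_sub, evHom_X, evHom_C, sub_self, zero_mul, sub_eq_zero] at this
  have hpne : (p : ℤ_[p]) ≠ 0 := by
    exact_mod_cast Nat.cast_ne_zero.mpr (Fact.out : Nat.Prime p).ne_zero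
  exact (mul_left_cancel₀ hpne this).symm

theorem stmt8 (p : ℕ) [Fact (Nat.Prime p)] (hodd : Odd p)
    (C' : Set (Ideal (PowerSeries ℤ_[p]))) (hC' : C'.Countable) :
    ∃ u : ℤ_[p], (∃ lam : ℤ_[p], u = 1 + p * lam) ∧
      Ideal.span {(X + 1 - C u : PowerSeries ℤ_[p])} ∉ C' ∧
      ∀ n : ℕ,
        Infinite (PowerSeries ℤ_[p] ⧸ Ideal.span
            {(X + 1 - C u : PowerSeries ℤ_[p]),
             ((X + 1) ^ p ^ n - C (u ^ p ^ n))}) ∧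
        Nonempty ((PowerSeries ℤ_[p] ⧸ Ideal.span
            {(X + 1 - C u : PowerSeries ℤ_[p]),
             ((X + 1) ^ p ^ n - C (u ^ p ^ n))}) ≃+* ℤ_[p]) := by
  -- find lam avoiding C'
  have key : ∃ lam : ℤ_[p],
      Ideal.span {(X + 1 - C (1 + p * lam) : PowerSeries ℤ_[p])} ∉ C' := by
    by_contra hcon
    push_neg at hcon
    haveI := hC'.to_subtype
    have hinj : Function.Injective (fun lam : ℤ_[p] =>
        (⟨_, hcon lam⟩ : C')) := fun l m h => span_inj (congrArg Subtype.val h)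
    exact not_countable_padicInt hinj.countable
  obtain ⟨lam, hlam⟩ := key
  set u : ℤ_[p] := 1 + p * lam with hu
  set a : ℤ_[p] := (p : ℤ_[p]) * lam with hadef
  have ha : ‖a‖ < 1 := norm_p_mul_lt_one lam
  have e1 : (X + 1 - C u : PowerSeries ℤ_[p]) = X - C a := rewrite_gen lam
  refine ⟨u, ⟨lam, rfl⟩, hlam, fun n => ?_⟩
  have hdvd : (X + 1 - C u : PowerSeries ℤ_[p])
      ∣ ((X + 1) ^ p ^ n - C (u ^ p ^ n)) := by
    rw [map_pow]
    exact sub_dvd_pow_sub_pow _ _ _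
  have hspan : Ideal.span {(X + 1 - C u : PowerSeries ℤ_[p]),
      ((X + 1) ^ p ^ n - C (u ^ p ^ n))}
      = Ideal.span {(X - C a : PowerSeries ℤ_[p])} := by
    rw [show ({(X + 1 - C u : PowerSeries ℤ_[p]),
        ((X + 1) ^ p ^ n - C (u ^ p ^ n))} : Set (PowerSeries ℤ_[p]))
      = insert (X + 1 - C u) {((X + 1) ^ p ^ n - C (u ^ p ^ n))} from rfl]
    rw [Ideal.span_insert, sup_eq_left.mpr
      (Ideal.span_singleton_le_span_singleton.mpr hdvd), e1]
  have hsurj : Function.Surjective (evHom a ha) := fun c => ⟨C c, evHom_C a ha c⟩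
  have iso : (PowerSeries ℤ_[p] ⧸ Ideal.span
      {(X + 1 - C u : PowerSeries ℤ_[p]),
       ((X + 1) ^ p ^ n - C (u ^ p ^ n))}) ≃+* ℤ_[p] :=
    (Ideal.quotEquivOfEq (hspan.trans (ker_evHom a ha).symm)).trans
      (RingHom.quotientKerEquivOfSurjective hsurj)
  exact ⟨Infinite.of_injective iso.symm iso.symm.injective, ⟨iso⟩⟩
end
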